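/- If 2/j ∈ F_m (j odd, 2 < j ≤ m), then the immediate successor of 2/j in F_m is (⌈2(m+1)/j⌉-1) / ((j(⌈2(m+1)/j⌉-1)-1)/2) when ⌈2(m+1)/j⌉ is even, and (⌈2(m+1)/j⌉-2) / ((j(⌈2(m+1)/j⌉-2)-1)/2) when ⌈2(m+1)/j⌉ is odd. -/

import Mathlib

/-- The Farey sequence of order `m`: rationals in `[0,1]` with denominator at most `m`. -/
def Farey (m : ℕ) : Set ℚ := {q | 0 ≤ q ∧ q ≤ 1 ∧ q.den ≤ m}

/-- If `2/j ∈ F_m` (`j` odd, `2 < j ≤ m`), then the immediate successor of `2/j`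
in `F_m` is `(⌈2(m+1)/j⌉-1)/((j(⌈2(m+1)/j⌉-1)-1)/2)` when `⌈2(m+1)/j⌉` is even,
and `(⌈2(m+1)/j⌉-2)/((j(⌈2(m+1)/j⌉-2)-1)/2)` when `⌈2(m+1)/j⌉` is odd. -/
theorem farey_succ_two_div (m j : ℕ) (hm : 1 < m) (hj : 2 < j) (hjm : j ≤ m)
    (hodd : Odd j) :
    (let c : ℤ := ⌈(2 * ((m : ℚ) + 1)) / j⌉
     let s : ℚ := if Even c then ((c : ℚ) - 1) / (((j : ℚ) * ((c : ℚ) - 1) - 1) / 2)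
                  else ((c : ℚ) - 2) / (((j : ℚ) * ((c : ℚ) - 2) - 1) / 2)
     s ∈ Farey m ∧ 2 / (j : ℚ) < s ∧
       ∀ r ∈ Farey m, 2 / (j : ℚ) < r → s ≤ r) := by
  intro c s
  have hjQ : (0:ℚ) < (j:ℚ) := by
    have : 0 < j := by omega
    exact_mod_cast this
  have hjZ : (0:ℤ) < (j:ℤ) := by exact_mod_cast (by omega : 0 < j)
  -- basic ceiling facts
  have hcle : (2 * (m + 1) : ℤ) ≤ (j:ℤ) * c := by
    have h := Int.le_ceil ((2 * ((m:ℚ) + 1)) / j)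
    rw [div_le_iff₀ hjQ] at h
    have : (2 * ((m:ℚ) + 1)) ≤ (j:ℚ) * c := by linarith
    exact_mod_cast this
  have hclt : (j:ℤ) * (c - 1) ≤ 2 * m + 1 := by
    by_contra h
    push_neg at h
    have h' : (2 * (m + 1) : ℤ) ≤ (j:ℤ) * (c - 1) := by omega
    have h'' : (2 * (m + 1) : ℤ) ≤ (c - 1) * (j:ℤ) := by nlinarith [h']
    have hQ : (2 * ((m:ℚ) + 1)) / j ≤ ((c - 1 : ℤ) : ℚ) := by
      rw [div_le_iff₀ hjQ]
      push_cast
      exact_mod_cast h''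
    have := Int.ceil_le.mpr hQ
    omega
  have hc3 : 3 ≤ c := by
    have h2 : (2:ℚ) < (2 * ((m:ℚ) + 1)) / j := by
      rw [lt_div_iff₀ hjQ]
      have : (j:ℚ) < (m:ℚ) + 1 := by exact_mod_cast (by omega : j < m + 1)
      linarith
    have := Int.le_ceil ((2 * ((m:ℚ) + 1)) / j)
    have : (2:ℚ) < (c:ℚ) := lt_of_lt_of_le h2 this
    exact_mod_cast (by exact_mod_cast this : (2:ℤ) < c)
  -- define p
  set p : ℤ := if Even c then c - 1 else c - 2 with hp
  have hpodd : Odd p := by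
    rw [hp]
    rcases Int.even_or_odd c with he | ho
    · simp [he, Even.sub_odd he odd_one]
    · have : ¬ Even c := by simpa [Int.not_even_iff_odd] using ho
      simp [this]
      rcases ho with ⟨k, hk⟩
      exact ⟨k, hk⟩
  have hp1 : 1 ≤ p := by
    rw [hp]; split
    · omega
    · omega
  have hub : (j:ℤ) * p ≤ 2 * m + 1 := by
    rw [hp]; split
    · exact hclt
    · nlinarith
  have hlb : 2 * (m:ℤ) + 2 ≤ (j:ℤ) * (p + 2) := by
    rw [hp]; split
    · nlinarith
    · simpa using (by linarith [hcle] : 2 * (m:ℤ) + 2 ≤ (j:ℤ) * c)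
  have hjodd : Odd (j:ℤ) := by exact_mod_cast hodd
  have hjpodd : Odd ((j:ℤ) * p) := hjodd.mul hpodd
  obtain ⟨q, hq⟩ := hjpodd
  -- q facts
  have hj3 : (3:ℤ) ≤ (j:ℤ) := by exact_mod_cast (by omega : 3 ≤ j)
  have hq1 : 1 ≤ q := by nlinarith
  have hqm : q ≤ m := by omega
  have hmqj : (m:ℤ) < q + j := by nlinarith
  have hpq : p ≤ q := by nlinarith
  have hqQ : (0:ℚ) < (q:ℚ) := by exact_mod_cast hq1
  -- s = p / q
  have hs : s = (p:ℚ) / (q:ℚ) := by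
    have hqcast : ((j:ℚ) * (p:ℚ) - 1) / 2 = (q:ℚ) := by
      have h2 : ((j:ℚ) * (p:ℚ)) = 2*(q:ℚ)+1 := by exact_mod_cast congrArg (fun x : ℤ => (x : ℚ)) hq
      linarith
    show (if Even c then ((c : ℚ) - 1) / (((j : ℚ) * ((c : ℚ) - 1) - 1) / 2)
                  else ((c : ℚ) - 2) / (((j : ℚ) * ((c : ℚ) - 2) - 1) / 2)) = _
    rw [hp] at hqcast ⊢
    split
    · rename_i h
      rw [if_pos h] at hqcast
      push_cast at hqcast ⊢
      rw [hqcast]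
    · rename_i h
      rw [if_neg h] at hqcast
      push_cast at hqcast ⊢
      rw [hqcast]
  rw [hs]
  refine ⟨⟨?_, ?_, ?_⟩, ?_, ?_⟩
  · positivity
  · rw [div_le_one hqQ]
    exact_mod_cast hpq
  · -- denominator bound
    have hdvd : (((p:ℚ) / (q:ℚ)).den : ℤ) ∣ q := by
      have := Rat.den_dvd p q
      rwa [Rat.divInt_eq_div] at this
    have hle : (((p:ℚ) / (q:ℚ)).den : ℤ) ≤ q := Int.le_of_dvd (by omega) hdvd
    omega
  · rw [div_lt_div_iff₀ hjQ hqQ]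
    have : (2:ℤ) * q < p * j := by nlinarith
    exact_mod_cast this
  · -- minimality
    intro r hr hlt
    rcases hr with ⟨hr0, hr1, hrden⟩
    have hbpos : (0:ℚ) < (r.den : ℚ) := by exact_mod_cast r.pos
    have hnum : r = (r.num : ℚ) / (r.den : ℚ) := (Rat.num_div_den r).symm
    have h2b : 2 * (r.den:ℤ) < r.num * j := by
      rw [hnum, div_lt_div_iff₀ hjQ hbpos] at hlt
      exact_mod_cast hlt
    by_contra hcon
    push_neg at hcon
    have haq : r.num * q < p * r.den := by
      rw [hnum, div_lt_div_iff₀ hbpos hqQ] at hcon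
      exact_mod_cast hcon
    have hbm : (r.den:ℤ) ≤ m := by exact_mod_cast hrden
    have key : (r.den:ℤ) ≥ q + j := by nlinarith
    omega
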